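/- Let h(x) = γx on GF(2^m) for a primitive element γ, n = 2^m, and let C_{H,h} ⊆ X^n be the associated perfect distance-3 code. Then for every k with 1 < k < n, no fixing of n − k coordinates of C_{H,h} to constants yields a perfect distance-3 code in X^k; equivalently, the matching χ^{-1}(C_{H,h}) contains no submatching of 2^{k-1} edges covering a subcube of {0,1}^n obtained by fixing n − k coordinates. -/

import Mathlib

/-- Binary words of length `n`. -/
abbrev BW (n : ℕ) := Fin n → ZMod 2

/-- Ternary words of length `n` over `{0,1,*}`, with `none` playing the role of `*`. -/
abbrev TW (n : ℕ) := Fin n → Option (ZMod 2)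

/-- Coset `{ x ∈ F^n : Σ x_i = ε, Σ x_i α_i = β }` of the extended Hamming code, with
syndromes computed in the field `F = GF(2^m)` (`x_i α_i` is the natural `ℕ`-scalar
action of the bit `x_i`). -/
def cosetF {n : ℕ} {F : Type*} [AddCommGroup F] (α : Fin n → F) (ε : ZMod 2) (β : F) :
    Set (BW n) :=
  {x | (∑ i, x i) = ε ∧ (∑ i, (x i).val • α i) = β}

/-- `r(p)` for an edge `{p, q}`: `*` where `p` and `q` differ, `p` elsewhere. -/
def rword {n : ℕ} (p q : BW n) : TW n := fun i => if p i = q i then some (p i) else none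

open Finset


lemma fiber_count {W F : Type*} [AddCommGroup W] [Fintype W] [AddCommGroup F]
    (L : W →+ F) (c : F) (hc : c ∈ L.range) :
    {x | L x = c}.ncard * Nat.card L.range = Nat.card W := by
  obtain ⟨x₀, hx₀⟩ := hc
  have himg : {x | L x = c} = (fun w => x₀ + w) '' (L.ker : Set W) := by
    ext x
    simp only [Set.mem_setOf_eq, Set.mem_image, SetLike.mem_coe, AddMonoidHom.mem_ker]
    constructor
    · intro hx; exact ⟨x - x₀, by simp [map_sub, hx, hx₀], by abel⟩
    · rintro ⟨w, hw, rfl⟩; simp [map_add, hw, hx₀]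
  rw [himg, Set.ncard_image_of_injective _ (add_right_injective x₀)]
  have h1 : (L.ker : Set W).ncard = Nat.card L.ker := by
    rw [← Nat.card_coe_set_eq]; rfl
  rw [h1]

  have h2 : Nat.card W = Nat.card (W ⧸ L.ker) * Nat.card L.ker :=
    AddSubgroup.card_eq_card_quotient_mul_card_addSubgroup L.ker
  have h3 : Nat.card (W ⧸ L.ker) = Nat.card L.range :=
    Nat.card_congr (QuotientAddGroup.quotientKerEquivRange L).toEquiv
  rw [h2, h3, mul_comm]

lemma stab_inv {F : Type*} [Field F] [Fintype F] (V : AddSubgroup F) (a : F) (ha : a ≠ 0)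
    (h : ∀ v ∈ V, a * v ∈ V) : ∀ v ∈ V, a⁻¹ * v ∈ V := by
  have hsub : (fun v => a * v) '' (V : Set F) ⊆ (V : Set F) := by
    rintro _ ⟨v, hv, rfl⟩; exact h v hv
  have heq : (fun v => a * v) '' (V : Set F) = (V : Set F) :=
    Set.eq_of_subset_of_ncard_le hsub
      (by rw [Set.ncard_image_of_injective _ (mul_right_injective₀ ha)]) (Set.toFinite _)
  intro v hv
  have : v ∈ (fun v => a * v) '' (V : Set F) := by rw [heq]; exact hv
  obtain ⟨w, hw, hww⟩ := this
  rw [← hww, inv_mul_cancel_left₀ ha]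
  exact hw

lemma V_top {F : Type*} [Field F] (V : AddSubgroup F) (v₀ : F) (hv₀ : v₀ ∈ V) (hne : v₀ ≠ 0)
    (hstab : ∀ x : F, ∀ v ∈ V, x * v ∈ V) : ∀ y : F, y ∈ V := fun y => by
  have := hstab (y * v₀⁻¹) v₀ hv₀
  rwa [mul_assoc, inv_mul_cancel₀ hne, mul_one] at this

/-- let `F = GF(2^m)`, `γ` a primitive element, `h x = γx`, `n = 2^m`, and
let `C_{H,h} = ⋃_β R(H^0_β, H^1_{γβ}) ⊆ X^n` be the associated perfect distance-3 code.
Then for every `k` with `1 < k < n`, no fixing of `n - k` coordinates to constants yields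
a perfect distance-3 code in `X^k`: there is no set `I` of `n - k` coordinates and values
`z` such that the codewords of `C_{H,h}` equal to `z` on `I` number `2^(k-1)`. -/
theorem stmt14 {m : ℕ} (hm : 2 ≤ m) (F : Type*) [Field F] [Fintype F]
    (hF : Fintype.card F = 2 ^ m)
    (γ : F) (hγ : ∀ x : F, x ≠ 0 → ∃ j : ℕ, γ ^ j = x)
    (α : Fin (2 ^ m) → F) (hα : Function.Bijective α) :
    let C : Set (TW (2 ^ m)) :=
      {c | ∃ (β : F) (p q : BW (2 ^ m)), p ∈ cosetF α 0 β ∧ q ∈ cosetF α 1 (γ * β) ∧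
            hammingDist p q = 1 ∧ c = rword p q}
    ∀ k : ℕ, 1 < k → k < 2 ^ m →
      ¬ ∃ (I : Finset (Fin (2 ^ m))) (z : BW (2 ^ m)),
          I.card = 2 ^ m - k ∧
          Set.ncard {c ∈ C | ∀ i ∈ I, c i = some (z i)} = 2 ^ (k - 1) := by
  classical
  -- characteristic 2
  haveI hp2 : CharP F 2 := by
    haveI h := ringChar.charP F
    obtain ⟨nn, hprime, hcard⟩ := FiniteField.card F (ringChar F)
    have hdvd : ringChar F ∣ 2 ^ m := by
      rw [← hF, hcard]; exact dvd_pow_self _ (by exact_mod_cast nn.ne_zero)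
    have : ringChar F = 2 :=
      (Nat.prime_dvd_prime_iff_eq hprime Nat.prime_two).mp (hprime.dvd_of_dvd_pow hdvd)
    rwa [this] at h
  have haa : ∀ a : F, a + a = 0 := CharTwo.add_self_eq_zero
  have hab : ∀ a b : F, a + b = 0 → a = b := by
    intro a b h
    have h2 := eq_neg_of_add_eq_zero_left h
    rwa [CharTwo.neg_eq] at h2
  set e : ZMod 2 →+* F := ZMod.castHom (dvd_refl 2) F with he
  -- gamma facts
  have hbig : ∃ x : F, x ≠ 0 ∧ x ≠ 1 := by
    by_contra hx
    push_neg at hx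
    have hsub : (Finset.univ : Finset F) ⊆ {0, 1} := by
      intro x _
      by_cases h0 : x = 0
      · simp [h0]
      · simp [hx x h0]
    have := Finset.card_le_card hsub
    rw [Finset.card_univ, hF] at this
    have h4 : 4 ≤ 2 ^ m := by calc 4 = 2^2 := rfl
                                   _ ≤ 2 ^ m := Nat.pow_le_pow_right (by norm_num) hm
    have : (({0, 1} : Finset F)).card ≤ 2 := Finset.card_insert_le _ _ |>.trans (by simp)
    omega
  have hγ0 : γ ≠ 0 := by
    rintro rfl
    obtain ⟨x, hx0, hx1⟩ := hbig
    obtain ⟨j, hj⟩ := hγ x hx0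
    rcases j with _ | j
    · simp at hj; exact hx1 hj.symm
    · rw [zero_pow (Nat.succ_ne_zero j)] at hj; exact hx0 hj.symm
  have hγ1 : γ + 1 ≠ 0 := by
    intro h
    have : γ = 1 := hab _ _ h
    subst this
    obtain ⟨x, hx0, hx1⟩ := hbig
    obtain ⟨j, hj⟩ := hγ x hx0
    rw [one_pow] at hj; exact hx1 hj.symm
  intro C k hk1 hk2
  rintro ⟨I, z, hIcard, hScard⟩
  -- basic defs
  set σ : BW (2^m) → F := fun p => ∑ j, e (p j) * α j with hσ
  set π : BW (2^m) → ZMod 2 := fun p => ∑ j, p j with hπ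
  set ι : BW (2^m) → Fin (2^m) := fun p => (Equiv.ofBijective α hα).symm ((γ+1) * σ p) with hιdef
  have hι : ∀ p, α (ι p) = (γ+1) * σ p := fun p =>
    (Equiv.ofBijective α hα).apply_symm_apply _
  have hvalsum : ∀ p : BW (2^m), (∑ i, (p i).val • α i) = σ p := by
    intro p
    refine Finset.sum_congr rfl fun i _ => ?_
    rw [nsmul_eq_mul, ZMod.natCast_val, he, ZMod.castHom_apply]
  -- sums over updates
  have hσupd : ∀ (p : BW (2^m)) i, σ (Function.update p i (p i + 1)) = σ p + α i := by
    intro p i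
    simp only [hσ]
    rw [← Finset.add_sum_erase univ (fun j => e (Function.update p i (p i + 1) j) * α j)
        (mem_univ i),
      ← Finset.add_sum_erase univ (fun j => e (p j) * α j) (mem_univ i)]
    rw [Finset.sum_congr rfl
      (fun j hj => by rw [Function.update_of_ne (Finset.ne_of_mem_erase hj)])]
    rw [Function.update_self, map_add, map_one]
    ring
  have hπupd : ∀ (p : BW (2^m)) i, π (Function.update p i (p i + 1)) = π p + 1 := by
    intro p i
    simp only [hπ]
    rw [← Finset.add_sum_erase univ (Function.update p i (p i + 1)) (mem_univ i),
      ← Finset.add_sum_erase univ p (mem_univ i)]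
    rw [Finset.sum_congr rfl
      (fun j hj => by rw [Function.update_of_ne (Finset.ne_of_mem_erase hj)])]
    rw [Function.update_self]
    ring
  -- edge structure
  have hedge : ∀ p q : BW (2^m), hammingDist p q = 1 →
      ∃ i, q = Function.update p i (p i + 1) := by
    intro p q h
    simp only [hammingDist] at h
    rw [Finset.card_eq_one] at h
    obtain ⟨i, hi⟩ := h
    refine ⟨i, funext fun j => ?_⟩
    rcases eq_or_ne j i with rfl | hne
    · rw [Function.update_self]
      have hj : j ∈ ({j' | p j' ≠ q j'} : Finset (Fin (2^m))) := by
        rw [hi]; exact Finset.mem_singleton_self _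
      simp only [Finset.mem_filter, Finset.mem_univ, true_and] at hj
      revert hj
      generalize p j = a; generalize q j = b
      revert a b; decide
    · rw [Function.update_of_ne hne]
      by_contra hne2
      have hj : j ∈ ({j' | p j' ≠ q j'} : Finset (Fin (2^m))) := by
        simp only [Finset.mem_filter, Finset.mem_univ, true_and]
        exact fun hh => hne2 hh.symm
      rw [hi, Finset.mem_singleton] at hj
      exact hne hj
  have hdist : ∀ (p : BW (2^m)) i, hammingDist p (Function.update p i (p i + 1)) = 1 := by
    intro p i
    simp only [hammingDist]
    rw [Finset.card_eq_one]
    refine ⟨i, ?_⟩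
    ext j
    simp only [Finset.mem_filter, Finset.mem_univ, true_and, Finset.mem_singleton]
    constructor
    · intro hj
      by_contra hne
      rw [Function.update_of_ne hne] at hj
      exact hj rfl
    · rintro rfl
      rw [Function.update_self]
      have : ∀ a : ZMod 2, ¬ a = a + 1 := by decide
      exact this _
  -- parity determination
  have hdet : ∀ p : BW (2^m), π p = 0 → ∀ i, p i = ∑ j ∈ univ.erase i, p j := by
    intro p h i
    simp only [hπ] at h
    have h0 : p i + ∑ j ∈ univ.erase i, p j = 0 := by
      rw [Finset.add_sum_erase univ p (mem_univ i)]; exact h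
    exact (by decide : ∀ a b : ZMod 2, a + b = 0 → a = b) _ _ h0
  -- Phi and P
  set Φ : BW (2^m) → TW (2^m) :=
    fun p => rword p (Function.update p (ι p) (p (ι p) + 1)) with hΦdef
  have hΦval : ∀ p j, Φ p j = if j = ι p then none else some (p j) := by
    intro p j
    simp only [hΦdef, rword]
    rcases eq_or_ne j (ι p) with rfl | hne
    · rw [Function.update_self, if_pos rfl]
      have : ∀ a : ZMod 2, ¬ a = a + 1 := by decide
      rw [if_neg (this _)]
    · rw [Function.update_of_ne hne, if_pos rfl, if_neg hne]
  set P : Set (BW (2^m)) := {p | π p = 0 ∧ ι p ∉ I ∧ ∀ i ∈ I, p i = z i} with hPdef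
  have hCmem : ∀ c, c ∈ C ↔ ∃ (β : F) (p q : BW (2 ^ m)),
      p ∈ cosetF α 0 β ∧ q ∈ cosetF α 1 (γ * β) ∧ hammingDist p q = 1 ∧ c = rword p q :=
    fun c => Iff.rfl
  have hSP : {c ∈ C | ∀ i ∈ I, c i = some (z i)} = Φ '' P := by
    ext c
    simp only [Set.mem_sep_iff, Set.mem_image]
    constructor
    · rintro ⟨hcC, hcz⟩
      rw [hCmem] at hcC
      obtain ⟨β, p, q, ⟨hpπ, hpσ⟩, ⟨hqπ, hqσ⟩, hdist1, rfl⟩ := hcC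
      rw [hvalsum] at hpσ hqσ
      obtain ⟨i, rfl⟩ := hedge p q hdist1
      have hσq := hσupd p i
      rw [hqσ, hpσ] at hσq
      have hαi : α i = (γ + 1) * β := by linear_combination - hσq - haa β
      have hiι : ι p = i := by
        apply hα.injective
        rw [hι, hpσ, hαi]
      have hqΦ : rword p (Function.update p i (p i + 1)) = Φ p := by
        simp only [hΦdef, hiι]
      have hnone : rword p (Function.update p i (p i + 1)) i = none := by
        rw [hqΦ, hΦval, if_pos hiι.symm]
      have hiI : i ∉ I := by
        intro hmem
        have hcz' := hcz i hmem
        rw [hnone] at hcz'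
        cases hcz'
      refine ⟨p, ⟨hpπ, hiι ▸ hiI, fun j hj => ?_⟩, hqΦ.symm⟩
      · have hji : j ≠ i := fun h => hiI (h ▸ hj)
        have hcz' := hcz j hj
        rw [hqΦ, hΦval, if_neg (hiι ▸ hji)] at hcz'
        exact Option.some_injective _ hcz'
    · rintro ⟨p, hp, rfl⟩
      obtain ⟨hpπ, hpι, hpz⟩ := hp
      constructor
      · rw [hCmem]
        refine ⟨σ p, p, Function.update p (ι p) (p (ι p) + 1), ⟨hpπ, ?_⟩, ⟨?_, ?_⟩,
          hdist p (ι p), rfl⟩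
        · rw [hvalsum]
        · show π _ = 1
          rw [hπupd, hpπ, zero_add]
        · rw [hvalsum, hσupd, hι]
          linear_combination haa (σ p)
      · intro j hj
        rw [hΦval, if_neg (fun h : j = ι p => hpι (h ▸ hj)), hpz j hj]
  have hinj : Set.InjOn Φ P := by
    intro p hp p' hp' heq
    have hll : ι p = ι p' := by
      by_contra hne
      have h1 := congrFun heq (ι p)
      rw [hΦval, hΦval, if_pos rfl, if_neg hne] at h1
      cases h1
    funext j
    rcases eq_or_ne j (ι p) with rfl | hne
    · rw [hdet p hp.1 (ι p), hdet p' hp'.1 (ι p)]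
      refine Finset.sum_congr rfl fun j' hj' => ?_
      have h1 := congrFun heq j'
      rw [hΦval, hΦval, if_neg (Finset.ne_of_mem_erase hj'),
        if_neg (by rw [← hll]; exact Finset.ne_of_mem_erase hj')] at h1
      exact Option.some_injective _ h1
    · have h1 := congrFun heq j
      rw [hΦval, hΦval, if_neg hne, if_neg (by rw [← hll]; exact hne)] at h1
      exact Option.some_injective _ h1
  have hPcard : P.ncard = 2 ^ (k - 1) := by
    rw [hSP, Set.ncard_image_of_injOn hinj] at hScard; exact hScard
  -- counting setup
  set J : Finset (Fin (2^m)) := Iᶜ with hJdef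
  have hJcard : J.card = k := by
    rw [hJdef, Finset.card_compl, hIcard]
    simp only [Fintype.card_fin]
    exact Nat.sub_sub_self (le_of_lt hk2)
  set s₀ : ZMod 2 := ∑ j ∈ I, z j with hs₀
  set A : F := ∑ j ∈ I, e (z j) * α j with hA
  set lam : F := (γ+1)⁻¹ + e s₀ with hlam
  set cc : Fin (2^m) → F := fun i => lam * α i + A with hcc
  set D : Set F := {x | ∃ j ∈ J, ∃ j' ∈ J, x = α j + α j'} with hD
  set V : AddSubgroup F := AddSubgroup.closure D with hV
  -- per-direction pieces
  set Pp : Fin (2^m) → Finset (BW (2^m)) :=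
    fun i => univ.filter (fun p => (∀ j ∈ I, p j = z j) ∧ π p = 0 ∧ ι p = i) with hPp
  have hdisj : ∀ i, Disjoint I (J.erase i) :=
    fun i => Finset.disjoint_of_subset_right (Finset.erase_subset _ _) disjoint_compl_right
  have herase_eq : ∀ i ∈ J, univ.erase i = I ∪ J.erase i := by
    intro i hi
    have hiI : i ∉ I := Finset.mem_compl.mp hi
    ext j
    simp only [Finset.mem_erase, Finset.mem_univ, and_true, Finset.mem_union, hJdef,
      Finset.mem_compl]
    constructor
    · intro hj
      by_cases hjI : j ∈ I
      · exact Or.inl hjI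
      · exact Or.inr ⟨hj, hjI⟩
    · rintro (hj | ⟨hj, _⟩)
      · exact fun h => hiI (h ▸ hj)
      · exact hj
  have hsplit : P.ncard = ∑ i ∈ J, (Pp i).card := by
    have hPfin : P = ↑(univ.filter (fun p : BW (2^m) => π p = 0 ∧ ι p ∉ I ∧ ∀ j ∈ I, p j = z j)) := by
      ext p
      simp only [hPdef, Set.mem_setOf_eq, Finset.coe_filter, Finset.mem_univ, true_and]
    rw [hPfin, Set.ncard_coe_finset]
    have hbi : univ.filter (fun p : BW (2^m) => π p = 0 ∧ ι p ∉ I ∧ ∀ j ∈ I, p j = z j)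
        = J.biUnion Pp := by
      ext p
      simp only [Finset.mem_filter, Finset.mem_univ, true_and, Finset.mem_biUnion, hPp]
      constructor
      · rintro ⟨h1, h2, h3⟩
        refine ⟨ι p, ?_, ?_⟩
        · rw [hJdef]; exact Finset.mem_compl.mpr h2
        · exact ⟨h3, h1, rfl⟩
      · rintro ⟨i, hi, hmem⟩
        obtain ⟨h3, h1, rfl⟩ := hmem
        rw [hJdef] at hi
        exact ⟨h1, Finset.mem_compl.mp hi, h3⟩
    rw [hbi]
    apply Finset.card_biUnion
    intro i hi j hj hij
    rw [Function.onFun, Finset.disjoint_left]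
    intro p hp hq
    rw [hPp] at hp hq
    simp only [Finset.mem_filter] at hp hq
    exact hij (hp.2.2.2 ▸ hq.2.2.2)
  -- the linear maps
  have Ladd : ∀ (i : Fin (2^m)) (x y : ↥(J.erase i) → ZMod 2),
      (∑ j : ↥(J.erase i), e ((x + y) j) * (α ↑j + α i))
        = (∑ j : ↥(J.erase i), e (x j) * (α ↑j + α i))
          + ∑ j : ↥(J.erase i), e (y j) * (α ↑j + α i) := by
    intro i x y
    rw [← Finset.sum_add_distrib]
    exact Finset.sum_congr rfl fun j _ => by rw [Pi.add_apply, map_add, add_mul]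
  let L : (i : Fin (2^m)) → ((↥(J.erase i) → ZMod 2) →+ F) := fun i =>
    AddMonoidHom.mk' (fun x => ∑ j : ↥(J.erase i), e (x j) * (α ↑j + α i)) (Ladd i)
  have hLval : ∀ (i : Fin (2^m)) (x : ↥(J.erase i) → ZMod 2),
      L i x = ∑ j : ↥(J.erase i), e (x j) * (α ↑j + α i) := fun _ _ => rfl
  have hrange : ∀ i ∈ J, (L i).range = V := by
    intro i hi
    apply le_antisymm
    · rintro x ⟨y, rfl⟩
      rw [hLval]
      apply AddSubgroup.sum_mem
      intro j _
      rcases (by decide : ∀ a : ZMod 2, a = 0 ∨ a = 1) (y j) with h | h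
      · rw [h, map_zero, zero_mul]; exact V.zero_mem
      · rw [h, map_one, one_mul]
        apply AddSubgroup.subset_closure
        exact ⟨↑j, (Finset.mem_erase.mp j.2).2, i, hi, rfl⟩
    · rw [hV, AddSubgroup.closure_le]
      rintro x ⟨j, hj, j', hj', rfl⟩
      have hmem : ∀ j'' ∈ J, α j'' + α i ∈ (L i).range := by
        intro j'' hj''
        rcases eq_or_ne j'' i with rfl | hne
        · rw [haa (α j'')]
          exact AddSubgroup.zero_mem _
        · refine ⟨fun j₀ => if (j₀ : Fin (2^m)) = j'' then 1 else 0, ?_⟩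
          rw [hLval]
          have hstep : ∀ j₀ : ↥(J.erase i),
              e (if (j₀ : Fin (2^m)) = j'' then 1 else 0) * (α ↑j₀ + α i)
                = if (j₀ : Fin (2^m)) = j'' then α j'' + α i else 0 := by
            intro j₀
            by_cases hc : (j₀ : Fin (2^m)) = j''
            · rw [if_pos hc, if_pos hc, map_one, one_mul, hc]
            · rw [if_neg hc, if_neg hc, map_zero, zero_mul]
          rw [Finset.sum_congr rfl (fun j₀ _ => hstep j₀)]
          rw [Finset.sum_coe_sort (J.erase i)
            (fun j₀ => if j₀ = j'' then α j'' + α i else 0)]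
          rw [Finset.sum_ite_eq' (J.erase i) j'' (fun _ => α j'' + α i)]
          rw [if_pos (Finset.mem_erase.mpr ⟨hne, hj''⟩)]
      have h1 := hmem j hj
      have h2 := hmem j' hj'
      have heq : (α j + α i) + (α j' + α i) = α j + α j' := by
        linear_combination haa (α i)
      rw [← heq]
      exact AddSubgroup.add_mem _ h1 h2
  have hWcard : ∀ i ∈ J, Nat.card (↥(J.erase i) → ZMod 2) = 2 ^ (k-1) := by
    intro i hi
    rw [Nat.card_eq_fintype_card, Fintype.card_fun, Fintype.card_coe,
      Finset.card_erase_of_mem hi, hJcard, ZMod.card]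
  have hkey : ∀ i ∈ J, ∀ p : BW (2^m), (∀ j ∈ I, p j = z j) → π p = 0 →
      L i (fun j₀ : ↥(J.erase i) => p ↑j₀) = σ p + A + e s₀ * α i := by
    intro i hi p hpz hpπ
    have hIz : ∑ j ∈ I, p j = s₀ := by
      rw [hs₀]; exact Finset.sum_congr rfl (fun j hj => hpz j hj)
    have hpi : p i = s₀ + ∑ j ∈ J.erase i, p j := by
      rw [hdet p hpπ i, herase_eq i hi, Finset.sum_union (hdisj i), hIz]
    have hAz : ∑ j ∈ I, e (p j) * α j = A := by
      rw [hA]; exact Finset.sum_congr rfl (fun j hj => by rw [hpz j hj])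
    have h2 : L i (fun j₀ : ↥(J.erase i) => p ↑j₀)
        = (∑ j ∈ J.erase i, e (p j) * α j) + e (∑ j ∈ J.erase i, p j) * α i := by
      rw [hLval]
      have hh : ∀ j₀ : ↥(J.erase i), e (p ↑j₀) * (α ↑j₀ + α i)
          = e (p ↑j₀) * α ↑j₀ + e (p ↑j₀) * α i := fun j₀ => by ring
      rw [Finset.sum_congr rfl (fun j₀ _ => hh j₀), Finset.sum_add_distrib,
        Finset.sum_coe_sort (J.erase i) (fun j => e (p j) * α j),
        Finset.sum_coe_sort (J.erase i) (fun j => e (p j) * α i),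
        ← Finset.sum_mul, ← map_sum]
    have h3 : σ p = A + e (p i) * α i + ∑ j ∈ J.erase i, e (p j) * α j := by
      simp only [hσ]
      rw [← Finset.add_sum_erase univ (fun j => e (p j) * α j) (mem_univ i),
        herase_eq i hi, Finset.sum_union (hdisj i), hAz]
      ring
    rw [h2, h3, hpi, map_add]
    linear_combination - haa A - haa (e s₀ * α i)
  have hfiber : ∀ i ∈ J, (Pp i).card = {x : (↥(J.erase i) → ZMod 2) | L i x = cc i}.ncard := by
    intro i hi
    have hiI : i ∉ I := by
      have := hi; rw [hJdef] at this; exact Finset.mem_compl.mp this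
    have hIneJ : ∀ j ∈ I, ¬ j ∈ J.erase i :=
      fun j hj hj' => (Finset.disjoint_left.mp (hdisj i)) hj hj'
    have himg : (fun p : BW (2^m) => fun j₀ : ↥(J.erase i) => p ↑j₀) '' ↑(Pp i)
        = {x : (↥(J.erase i) → ZMod 2) | L i x = cc i} := by
      ext x
      simp only [Set.mem_image, Set.mem_setOf_eq, Finset.mem_coe]
      constructor
      · rintro ⟨p, hp, rfl⟩
        simp only [hPp, Finset.mem_filter, Finset.mem_univ, true_and] at hp
        obtain ⟨hpz, hpπ, hpι⟩ := hp
        rw [hkey i hi p hpz hpπ]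
        have hσp : σ p = (γ+1)⁻¹ * α i := by
          have hh := hι p
          rw [hpι] at hh
          rw [hh, ← mul_assoc, inv_mul_cancel₀ hγ1, one_mul]
        rw [hσp]
        simp only [hcc, hlam]
        ring
      · intro hx
        set Y : ZMod 2 := ∑ j₀ : ↥(J.erase i), x j₀ with hY
        set p : BW (2^m) := fun j =>
          if h : j ∈ J.erase i then x ⟨j, h⟩ else if j ∈ I then z j else s₀ + Y with hpdef
        have hres : (fun j₀ : ↥(J.erase i) => p ↑j₀) = x := by
          funext j₀
          simp only [hpdef]
          rw [dif_pos j₀.2]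
        have hpz : ∀ j ∈ I, p j = z j := by
          intro j hj
          simp only [hpdef]
          rw [dif_neg (hIneJ j hj), if_pos hj]
        have hpJ : ∑ j ∈ J.erase i, p j = Y := by
          rw [← Finset.sum_coe_sort (J.erase i) p, hY]
          exact Finset.sum_congr rfl fun j₀ _ => congrFun hres j₀
        have hpi : p i = s₀ + Y := by
          simp only [hpdef]
          rw [dif_neg (Finset.notMem_erase i J), if_neg hiI]
        have hpπ : π p = 0 := by
          simp only [hπ]
          rw [← Finset.add_sum_erase univ p (mem_univ i), herase_eq i hi,
            Finset.sum_union (hdisj i), hpi]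
          have hIz : ∑ j ∈ I, p j = s₀ := by
            rw [hs₀]; exact Finset.sum_congr rfl fun j hj => hpz j hj
          rw [hIz, hpJ]
          exact (by decide : ∀ a b : ZMod 2, (a + b) + (a + b) = 0) s₀ Y
        have hL := hkey i hi p hpz hpπ
        rw [hres, hx] at hL
        have hσp : σ p = (γ+1)⁻¹ * α i := by
          simp only [hcc, hlam] at hL
          linear_combination -hL
        have hpι : ι p = i := by
          apply hα.injective
          rw [hι, hσp, ← mul_assoc, mul_inv_cancel₀ hγ1, one_mul]
        refine ⟨p, ?_, hres⟩
        simp only [hPp, Finset.mem_filter, Finset.mem_univ, true_and]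
        exact ⟨hpz, hpπ, hpι⟩
    have hinj2 : Set.InjOn (fun p : BW (2^m) => fun j₀ : ↥(J.erase i) => p ↑j₀) ↑(Pp i) := by
      intro p hp p' hp' heq
      simp only [Finset.mem_coe, hPp, Finset.mem_filter, Finset.mem_univ, true_and] at hp hp'
      obtain ⟨hpz, hpπ, hpι⟩ := hp
      obtain ⟨hpz', hpπ', hpι'⟩ := hp'
      have hJeq : ∀ j, ∀ hj : j ∈ J.erase i, p j = p' j :=
        fun j hj => congrFun heq (⟨j, hj⟩ : ↥(J.erase i))
      funext j
      by_cases hjI : j ∈ I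
      · rw [hpz j hjI, hpz' j hjI]
      · by_cases hji : j = i
        · rw [hji, hdet p hpπ i, hdet p' hpπ' i, herase_eq i hi,
            Finset.sum_union (hdisj i), Finset.sum_union (hdisj i)]
          congr 1
          · exact Finset.sum_congr rfl fun j' hj' => by rw [hpz j' hj', hpz' j' hj']
          · exact Finset.sum_congr rfl fun j' hj' => hJeq j' hj'
        · have hjJ : j ∈ J.erase i := by
            rw [Finset.mem_erase]
            exact ⟨hji, by rw [hJdef]; exact Finset.mem_compl.mpr hjI⟩
          exact hJeq j hjJ
    rw [← himg, Set.ncard_image_of_injOn hinj2, Set.ncard_coe_finset]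
  have hcount : ∀ i ∈ J, (if cc i ∈ V then ((Pp i).card * Nat.card V = 2 ^ (k-1)) else (Pp i).card = 0) := by
    intro i hi
    by_cases hgood : cc i ∈ V
    · rw [if_pos hgood]
      have hc : cc i ∈ (L i).range := by rw [hrange i hi]; exact hgood
      have hfc := fiber_count (L i) (cc i) hc
      rw [hrange i hi, hWcard i hi] at hfc
      rw [hfiber i hi]
      exact hfc
    · rw [if_neg hgood]
      have hempty : {x : (↥(J.erase i) → ZMod 2) | L i x = cc i} = ∅ := by
        ext x
        simp only [Set.mem_setOf_eq, Set.mem_empty_iff_false, iff_false]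
        intro hx
        exact hgood (by rw [← hrange i hi]; exact ⟨x, hx⟩)
      rw [hfiber i hi, hempty, Set.ncard_empty]
  -- summing up
  have htot : (∑ i ∈ J, (Pp i).card) = 2 ^ (k-1) := by rw [← hsplit, hPcard]
  set good : Finset (Fin (2^m)) := J.filter (fun i => cc i ∈ V) with hgooddef
  have hsum2 : 2 ^ (k-1) * Nat.card V = good.card * 2 ^ (k-1) := by
    calc 2 ^ (k-1) * Nat.card V = (∑ i ∈ J, (Pp i).card) * Nat.card V := by rw [htot]
      _ = ∑ i ∈ J, (Pp i).card * Nat.card V := Finset.sum_mul _ _ _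
      _ = ∑ i ∈ J, (if cc i ∈ V then 2 ^ (k-1) else 0) := by
          refine Finset.sum_congr rfl fun i hi => ?_
          have hc := hcount i hi
          by_cases hgood : cc i ∈ V
          · rw [if_pos hgood] at hc ⊢; exact hc
          · rw [if_neg hgood] at hc ⊢; rw [hc, zero_mul]
      _ = ∑ _i ∈ good, 2 ^ (k-1) := (Finset.sum_filter _ _).symm
      _ = good.card * 2 ^ (k-1) := by rw [Finset.sum_const, smul_eq_mul]
  have h2pos : 0 < 2 ^ (k-1) := Nat.pow_pos (by norm_num)
  have hgoodcard : good.card = Nat.card V := by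
    have hh := hsum2
    rw [mul_comm (good.card) _] at hh
    exact (Nat.eq_of_mul_eq_mul_left h2pos hh).symm
  obtain ⟨i₀, hi₀⟩ : J.Nonempty := by
    rw [← Finset.card_pos, hJcard]; exact Nat.lt_trans Nat.zero_lt_one hk1
  have hksub : k ≤ Nat.card V := by
    have hinj3 : Set.InjOn (fun j => α j + α i₀) ↑J := by
      intro j _ j' _ hjj
      exact hα.injective (by linear_combination hjj)
    have himg3 : ((fun j => α j + α i₀) '' ↑J).ncard = k := by
      rw [Set.ncard_image_of_injOn hinj3, Set.ncard_coe_finset, hJcard]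
    have hsubV : ((fun j => α j + α i₀) '' ↑J) ⊆ (V : Set F) := by
      rintro x ⟨j, hj, rfl⟩
      exact AddSubgroup.subset_closure ⟨j, hj, i₀, hi₀, rfl⟩
    calc k = ((fun j => α j + α i₀) '' ↑J).ncard := himg3.symm
      _ ≤ (V : Set F).ncard := Set.ncard_le_ncard hsubV (Set.toFinite _)
      _ = Nat.card V := by rw [← Nat.card_coe_set_eq]; rfl
  have hgle : good.card ≤ k := by
    rw [← hJcard]
    exact Finset.card_le_card (Finset.filter_subset _ _)
  have hkV : k = Nat.card V := le_antisymm hksub (hgoodcard ▸ hgle)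
  have hgoodJ : good = J := by
    apply Finset.eq_of_subset_of_card_le (Finset.filter_subset _ _)
    rw [hgoodcard, ← hkV, hJcard]
  have hall : ∀ i ∈ J, lam * α i + A ∈ V := by
    intro i hi
    have hig : i ∈ good := hgoodJ ▸ hi
    rw [hgooddef, Finset.mem_filter] at hig
    have hcci := hig.2
    simpa only [hcc] using hcci
  -- lambda stability
  have hlamstab : ∀ v ∈ V, lam * v ∈ V := by
    intro v hv
    rw [hV] at hv
    refine AddSubgroup.closure_induction ?_ ?_ ?_ ?_ hv
    · rintro x ⟨j, hj, j', hj', rfl⟩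
      have h1 := hall j hj
      have h2 := hall j' hj'
      have hadd := V.add_mem h1 h2
      have heq : (lam * α j + A) + (lam * α j' + A) = lam * (α j + α j') := by
        linear_combination haa A
      rwa [heq] at hadd
    · rw [mul_zero]; exact V.zero_mem
    · intro x y _ _ hx hy; rw [mul_add]; exact V.add_mem hx hy
    · intro x _ hx; rw [mul_neg]; exact V.neg_mem hx
  have hs01 : s₀ = 0 ∨ s₀ = 1 := (by decide : ∀ a : ZMod 2, a = 0 ∨ a = 1) s₀
  have hlamne : lam ≠ 0 := by
    rcases hs01 with h | h
    · rw [hlam, h, map_zero, add_zero]; exact inv_ne_zero hγ1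
    · rw [hlam, h, map_one]
      intro hc
      have h1 : (γ+1)⁻¹ = 1 := hab _ _ hc
      have h2 : γ + 1 = 1 := by rw [← inv_inv (γ+1), h1, inv_one]
      exact hγ0 (by linear_combination h2)
  -- gamma stability
  have hγstab : ∀ v ∈ V, γ * v ∈ V := by
    rcases hs01 with h | h
    · have hlameq : lam = (γ+1)⁻¹ := by rw [hlam, h, map_zero, add_zero]
      have hstabinv := stab_inv V lam hlamne hlamstab
      rw [hlameq, inv_inv] at hstabinv
      intro v hv
      have h1 := hstabinv v hv
      have heq : γ * v = (γ+1) * v + v := by linear_combination - haa v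
      rw [heq]; exact V.add_mem h1 hv
    · have hstabinv := stab_inv V lam hlamne hlamstab
      have hlamval : lam = (γ+1)⁻¹ + 1 := by rw [hlam, h, map_one]
      have hlaminv : lam⁻¹ = γ⁻¹ * (γ + 1) := by
        have hmul : lam * (γ⁻¹ * (γ + 1)) = 1 := by
          rw [hlamval]
          have e1 : (γ+1)⁻¹ * (γ+1) = 1 := inv_mul_cancel₀ hγ1
          have e2 : γ⁻¹ * γ = 1 := inv_mul_cancel₀ hγ0
          linear_combination γ⁻¹ * e1 + e2 + haa γ⁻¹
        exact inv_eq_of_mul_eq_one_right hmul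
      have hγinvstab : ∀ v ∈ V, γ⁻¹ * v ∈ V := by
        intro v hv
        have h1 := hstabinv v hv
        have heq : γ⁻¹ * v = lam⁻¹ * v + v := by
          rw [hlaminv]
          have e2 : γ⁻¹ * γ = 1 := inv_mul_cancel₀ hγ0
          linear_combination (- v) * e2 - haa v
        rw [heq]; exact V.add_mem h1 hv
      have hh := stab_inv V γ⁻¹ (inv_ne_zero hγ0) hγinvstab
      intro v hv
      have := hh v hv
      rwa [inv_inv] at this
  have hγpow : ∀ (j : ℕ), ∀ v ∈ V, γ ^ j * v ∈ V := by
    intro j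
    induction j with
    | zero => intro v hv; rw [pow_zero, one_mul]; exact hv
    | succ n ih =>
        intro v hv
        rw [pow_succ, mul_assoc]
        exact ih _ (hγstab v hv)
  have hstaball : ∀ x : F, ∀ v ∈ V, x * v ∈ V := by
    intro x v hv
    rcases eq_or_ne x 0 with rfl | hx
    · rw [zero_mul]; exact V.zero_mem
    · obtain ⟨j, rfl⟩ := hγ x hx
      exact hγpow j v hv
  obtain ⟨i₁, hi₁, i₂, hi₂, hne12⟩ := Finset.one_lt_card.mp
    (show 1 < J.card by rw [hJcard]; exact hk1)
  have hv₀ : α i₁ + α i₂ ∈ V := AddSubgroup.subset_closure ⟨i₁, hi₁, i₂, hi₂, rfl⟩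
  have hv₀ne : α i₁ + α i₂ ≠ 0 := fun hh => hne12 (hα.injective (hab _ _ hh))
  have hVtop := V_top V _ hv₀ hv₀ne hstaball
  have hVcard : Nat.card V = 2 ^ m := by
    have hVt : V = ⊤ := (AddSubgroup.eq_top_iff' V).mpr hVtop
    rw [hVt, AddSubgroup.card_top, Nat.card_eq_fintype_card, hF]
  rw [hVcard] at hkV
  exact absurd hkV (Nat.ne_of_lt hk2)
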